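/- Let N ≥ 3 be an integer, μ ∈ (0,1/4], α := 1/2 + √(1/4 − μ), and let q satisfy 1 < q < (N+α)/(N+α−1). Set κ_μ := α(N+α−2), ℓ_{N,q} := ((2−q)/(q−1))·(q/(q−1) − N), and note that ℓ_{N,q} > κ_μ; set γ₁ := ((ℓ_{N,q} − κ_μ)/α^q)^{1/(q−1)}. Then the function ū(x) := γ₁·x_N^{α}·|x|^{−(2−q)/(q−1)−α} satisfies Δū(x) + (μ/x_N²)·ū(x) ≤ ‖∇ū(x)‖^q for every x ∈ ℝ^N with x_N > 0. -/

import Mathlib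

open MeasureTheory Metric Set

/-- The Laplacian of `u : ℝ^N → ℝ`, as the sum of the second partial derivatives
in the coordinate directions. -/
noncomputable def lap {N : ℕ} (u : EuclideanSpace ℝ (Fin N) → ℝ)
    (x : EuclideanSpace ℝ (Fin N)) : ℝ :=
  ∑ i : Fin N, fderiv ℝ (fun y => fderiv ℝ u y (EuclideanSpace.single i 1)) x
    (EuclideanSpace.single i 1)

/-- The last coordinate index of `Fin N`. -/
def lastIdx (N : ℕ) (h : 0 < N) : Fin N := ⟨N - 1, by omega⟩

variable {N : ℕ}

local notation "E" => EuclideanSpace ℝ (Fin N)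

lemma normRpow (x : E) (hx : x ≠ 0) (p : ℝ) :
    HasFDerivAt (fun y : E => ‖y‖ ^ p)
      ((p * ‖x‖ ^ (p - 2)) • (innerSL ℝ x)) x := by
  have hnorm : (0:ℝ) < ‖x‖ := norm_pos_iff.mpr hx
  have h2 : HasFDerivAt (fun y : E => ‖y‖ ^ 2) (2 • (innerSL ℝ x)) x :=
    (hasStrictFDerivAt_norm_sq x).hasFDerivAt
  have h3 : HasDerivAt (fun t : ℝ => t ^ (p/2)) (p/2 * (‖x‖^2) ^ (p/2 - 1)) (‖x‖^2) :=
    Real.hasDerivAt_rpow_const (Or.inl (by positivity))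
  have h4 := (h3.comp_hasFDerivAt x h2).congr_fderiv (g' := (p * ‖x‖ ^ (p - 2)) • (innerSL ℝ x)) ?_
  · have hfun : ((fun t : ℝ => t ^ (p/2)) ∘ fun y : E => ‖y‖^2)
        = fun y : E => ‖y‖ ^ p := by
      funext y
      simp only [Function.comp]
      rw [← Real.rpow_natCast ‖y‖ 2, ← Real.rpow_mul (norm_nonneg y)]
      push_cast
      rw [show (2:ℝ) * (p/2) = p by ring]
    rwa [hfun] at h4
  · ext y
    simp only [ContinuousLinearMap.smul_apply, smul_eq_mul, ContinuousLinearMap.coe_smul']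
    rw [← Real.rpow_natCast ‖x‖ 2, ← Real.rpow_mul (norm_nonneg x)]
    push_cast
    rw [show (2:ℝ) * (p/2 - 1) = p - 2 by ring]
    ring

lemma projRpow (n : Fin N) (x : E) (hx : x n ≠ 0) (e : ℝ) :
    HasFDerivAt (fun y : E => (y n) ^ e)
      ((e * (x n) ^ (e - 1)) • (EuclideanSpace.proj n : E →L[ℝ] ℝ)) x := by
  have h := (Real.hasDerivAt_rpow_const (p := e) (Or.inl hx)).comp_hasFDerivAt x
    (EuclideanSpace.proj (𝕜 := ℝ) n).hasFDerivAt
  exact h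

lemma baseD (n : Fin N) (x : E) (hx : 0 < x n) (e1 e2 : ℝ) :
    HasFDerivAt (fun y : E => (y n) ^ e1 * ‖y‖ ^ e2)
      ((e1 * (x n) ^ (e1 - 1) * ‖x‖ ^ e2) • (EuclideanSpace.proj n : E →L[ℝ] ℝ)
        + (e2 * ‖x‖ ^ (e2 - 2) * (x n) ^ e1) • (innerSL ℝ x)) x := by
  have hx0 : x ≠ 0 := by intro h; rw [h] at hx; simp at hx
  have h := (projRpow n x hx.ne' e1).mul (normRpow x hx0 e2)
  refine h.congr_fderiv ?_
  ext y
  simp only [ContinuousLinearMap.add_apply, ContinuousLinearMap.coe_smul',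
    Pi.smul_apply, smul_eq_mul]
  ring

set_option maxHeartbeats 1000000 in
theorem aux (N : ℕ) (hN : 3 ≤ N) (μ α q : ℝ)
    (hμ : μ ∈ Set.Ioc (0:ℝ) (1/4)) (hα : α = 1/2 + Real.sqrt (1/4 - μ))
    (hq1 : 1 < q) (hq2 : q < ((N : ℝ) + α) / ((N : ℝ) + α - 1))
    (hlk : α * ((N : ℝ) + α - 2) < (2 - q) / (q - 1) * (q / (q - 1) - (N : ℝ)))
    (γ₁ : ℝ)
    (hγ₁ : γ₁ = (((2 - q) / (q - 1) * (q / (q - 1) - (N : ℝ)) - α * ((N : ℝ) + α - 2))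
        / α ^ q) ^ (1 / (q - 1)))
    (n : Fin N) (x : EuclideanSpace ℝ (Fin N)) (hx : 0 < x n) :
      lap (fun y => γ₁ * (y n) ^ α * ‖y‖ ^ (-(2 - q) / (q - 1) - α)) x
        + (μ / (x n) ^ 2) * (γ₁ * (x n) ^ α * ‖x‖ ^ (-(2 - q) / (q - 1) - α))
        ≤ ‖gradient (fun y => γ₁ * (y n) ^ α * ‖y‖ ^ (-(2 - q) / (q - 1) - α)) x‖ ^ q := by
  have hq1' : (0:ℝ) < q - 1 := by linarith
  have hN3 : (3:ℝ) ≤ (N:ℝ) := by exact_mod_cast hN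
  have hαl : 1/2 ≤ α := by
    rw [hα]; have := Real.sqrt_nonneg (1/4 - μ); linarith
  have hα1 : α < 1 := by
    rw [hα]
    have h4 : (1:ℝ)/4 - μ < (1/2)^2 := by nlinarith [hμ.1]
    have := (Real.sqrt_lt' (by norm_num : (0:ℝ) < 1/2)).mpr h4
    linarith
  have hα0 : (0:ℝ) < α := by linarith
  have hαμ : α * (α - 1) + μ = 0 := by
    have h := Real.sq_sqrt (show (0:ℝ) ≤ 1/4 - μ by linarith [hμ.2])
    rw [hα]; nlinarith [h]
  set b : ℝ := -(2 - q) / (q - 1) - α with hbdef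
  set X : ℝ := x n with hXdef
  set R : ℝ := ‖x‖ with hRdef
  have hx0 : x ≠ 0 := by intro h; rw [hXdef] at hx; rw [h] at hx; simp at hx
  have hR : 0 < R := norm_pos_iff.mpr hx0
  have hXp : 0 < X := hx
  have hsα : α ≤ (2 - q)/(q - 1) := by
    have hden : (0:ℝ) < (N:ℝ) + α - 1 := by linarith
    have h2 : q * ((N:ℝ) + α - 1) < (N:ℝ) + α := (lt_div_iff₀ hden).mp hq2
    rw [le_div_iff₀ hq1']
    nlinarith [h2]
  have hb2 : 0 ≤ b * (2*α + b) := by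
    have hbs : b = -((2 - q)/(q - 1)) - α := by rw [hbdef]; ring
    rw [hbs]
    nlinarith [hsα, hα0]
  have hE : (1:ℝ) ≤ q - α*(q - 1) := by nlinarith [hα1, hq1']
  have hcoef : b * (2*α + b + (N:ℝ) - 2)
      = (2 - q) / (q - 1) * (q / (q - 1) - (N : ℝ)) - α * ((N : ℝ) + α - 2) := by
    rw [hbdef]; field_simp; ring
  set L : ℝ := (2 - q) / (q - 1) * (q / (q - 1) - (N : ℝ)) - α * ((N : ℝ) + α - 2) with hLdef
  have hL : 0 < L := by rw [hLdef]; linarith [hlk]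
  have hαq : (0:ℝ) < α ^ q := Real.rpow_pos_of_pos hα0 q
  have hγpos : 0 < γ₁ := by
    rw [hγ₁]; exact Real.rpow_pos_of_pos (div_pos hL hαq) _
  have hγq : γ₁ ^ (q - 1) * α ^ q = L := by
    rw [hγ₁, ← Real.rpow_mul (le_of_lt (div_pos hL hαq)),
      one_div_mul_cancel (ne_of_gt hq1'), Real.rpow_one,
      div_mul_cancel₀ _ (ne_of_gt hαq)]
  have hfeq : (fun y : EuclideanSpace ℝ (Fin N) => γ₁ * (y n) ^ α * ‖y‖ ^ b)
      = fun y : EuclideanSpace ℝ (Fin N) => γ₁ * ((y n) ^ α * ‖y‖ ^ b) := by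
    funext y; ring
  rw [hfeq]
  set u : EuclideanSpace ℝ (Fin N) → ℝ := fun y : EuclideanSpace ℝ (Fin N) => γ₁ * ((y n) ^ α * ‖y‖ ^ b) with hudef
  -- first derivative on the open half space
  have hu' : ∀ y : EuclideanSpace ℝ (Fin N), 0 < y n → HasFDerivAt u
      (γ₁ • ((α * (y n) ^ (α - 1) * ‖y‖ ^ b) • (EuclideanSpace.proj n : EuclideanSpace ℝ (Fin N) →L[ℝ] ℝ)
        + (b * ‖y‖ ^ (b - 2) * (y n) ^ α) • (innerSL ℝ y))) y :=
    fun y hy => (baseD n y hy α b).const_mul γ₁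
  -- the gradient
  set A : ℝ := γ₁ * (α * X ^ (α - 1) * R ^ b) with hAdef
  set B : ℝ := γ₁ * (b * R ^ (b - 2) * X ^ α) with hBdef
  set v : EuclideanSpace ℝ (Fin N) := A • EuclideanSpace.single n (1:ℝ) + B • x with hvdef
  have hgrad : HasGradientAt u v x := by
    rw [hasGradientAt_iff_hasFDerivAt]
    refine (hu' x hx).congr_fderiv ?_
    ext y
    simp only [ContinuousLinearMap.smul_apply, ContinuousLinearMap.add_apply,
      ContinuousLinearMap.coe_smul', Pi.smul_apply, smul_eq_mul, innerSL_apply_apply,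
      InnerProductSpace.toDual_apply_apply, hvdef, inner_add_left, real_inner_smul_left,
      EuclideanSpace.inner_single_left, conj_trivial, PiLp.proj_apply]
    ring
  have hgv : gradient u x = v := hgrad.gradient
  -- norm of v
  have hnv2 : ‖v‖^2 = A^2 + 2*(A*B*X) + B^2*R^2 := by
    rw [hvdef, norm_add_sq_real, real_inner_smul_left, real_inner_smul_right,
      EuclideanSpace.inner_single_left, norm_smul, norm_smul, EuclideanSpace.norm_single]
    simp only [norm_one, mul_one, conj_trivial, Real.norm_eq_abs, mul_pow, sq_abs]
    rw [← hXdef, ← hRdef]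
    ring
  have hXα : (0:ℝ) < X ^ α := Real.rpow_pos_of_pos hXp _
  have hRb : (0:ℝ) < R ^ b := Real.rpow_pos_of_pos hR _
  have hXα1 : (0:ℝ) < X ^ (α-1) := Real.rpow_pos_of_pos hXp _
  have hRb2 : (0:ℝ) < R ^ (b-2) := Real.rpow_pos_of_pos hR _
  have hA0 : 0 < A := by
    rw [hAdef]; exact mul_pos hγpos (mul_pos (mul_pos hα0 hXα1) hRb)
  have hX2 : X ^ (2:ℝ) = X^2 := by
    rw [show (2:ℝ) = ((2:ℕ):ℝ) by norm_num, Real.rpow_natCast]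
  have hR2 : R ^ (2:ℝ) = R^2 := by
    rw [show (2:ℝ) = ((2:ℕ):ℝ) by norm_num, Real.rpow_natCast]
  have e1 : X ^ (α-1) = X ^ α / X := by
    rw [Real.rpow_sub hXp, Real.rpow_one]
  have e2 : R ^ (b-2) = R ^ b / R^2 := by
    rw [Real.rpow_sub hR, hR2]
  have e3 : X ^ (α-1-1) = X ^ α / X / X := by
    rw [Real.rpow_sub hXp, Real.rpow_sub hXp, Real.rpow_one]
  have e4 : R ^ (b-2-2) = R ^ b / R^2 / R^2 := by
    rw [Real.rpow_sub hR, Real.rpow_sub hR, hR2]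
  have hAv : A ≤ ‖v‖ := by
    have key : 2*(A*B*X) + B^2*R^2 = (γ₁ * X^α * R^b)^2 * (b*(2*α+b)) / R^2 := by
      rw [hAdef, hBdef, e1, e2]
      field_simp
    have hkey : 0 ≤ 2*(A*B*X) + B^2*R^2 := by
      rw [key]
      exact div_nonneg (mul_nonneg (sq_nonneg _) hb2) (sq_nonneg R)
    have h2 : A^2 ≤ ‖v‖^2 := by rw [hnv2]; linarith
    calc A = Real.sqrt (A^2) := (Real.sqrt_sq hA0.le).symm
      _ ≤ Real.sqrt (‖v‖^2) := Real.sqrt_le_sqrt h2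
      _ = ‖v‖ := Real.sqrt_sq (norm_nonneg v)
  -- second partial derivatives
  have hmem : {y : EuclideanSpace ℝ (Fin N) | 0 < y n} ∈ nhds x := by
    have hc : Continuous fun y : EuclideanSpace ℝ (Fin N) => y n :=
      (EuclideanSpace.proj (𝕜 := ℝ) n).continuous
    exact (isOpen_lt continuous_const hc).mem_nhds hx
  have hpart : ∀ i : Fin N, (fun y => fderiv ℝ u y (EuclideanSpace.single i 1)) =ᶠ[nhds x]
      fun y : EuclideanSpace ℝ (Fin N) =>
        γ₁ * α * (if n = i then (1:ℝ) else 0) * ((y n) ^ (α-1) * ‖y‖ ^ b)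
        + γ₁ * b * ((y n) ^ α * ‖y‖ ^ (b-2) * y i) := by
    intro i
    refine Filter.eventuallyEq_of_mem hmem (fun y hy => ?_)
    rw [(hu' y hy).fderiv]
    simp only [ContinuousLinearMap.smul_apply, ContinuousLinearMap.add_apply,
      ContinuousLinearMap.coe_smul', Pi.smul_apply, smul_eq_mul, innerSL_apply_apply,
      PiLp.proj_apply, EuclideanSpace.single_apply,
      EuclideanSpace.inner_single_right, conj_trivial, mul_one]
    ring
  have hT : ∀ i : Fin N,
      (fderiv ℝ (fun y => fderiv ℝ u y (EuclideanSpace.single i 1)) x) (EuclideanSpace.single i 1)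
      = (if n = i then (γ₁*α*((α-1) * X^(α-1-1) * R^b + b * R^(b-2) * X^(α-1) * X)
            + γ₁*b*(X*(α * X^(α-1) * R^(b-2)))) else 0)
        + γ₁*b*(X^α * R^(b-2) + (b-2) * R^(b-2-2) * X^α * (x i)^2) := by
    intro i
    rw [(hpart i).fderiv_eq]
    have h1 := (baseD n x hx (α-1) b).const_mul (γ₁ * α * (if n = i then (1:ℝ) else 0))
    have h2 := ((baseD n x hx α (b-2)).mul
      (EuclideanSpace.proj (𝕜 := ℝ) i).hasFDerivAt).const_mul (γ₁ * b)
    have h3 : fderiv ℝ (fun y : EuclideanSpace ℝ (Fin N) =>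
        γ₁ * α * (if n = i then (1:ℝ) else 0) * ((y n) ^ (α-1) * ‖y‖ ^ b)
        + γ₁ * b * ((y n) ^ α * ‖y‖ ^ (b-2) * y i)) x
        = (γ₁ * α * (if n = i then (1:ℝ) else 0)) •
            (((α - 1) * (x n) ^ (α - 1 - 1) * ‖x‖ ^ b) •
                (EuclideanSpace.proj n : EuclideanSpace ℝ (Fin N) →L[ℝ] ℝ)
              + (b * ‖x‖ ^ (b - 2) * (x n) ^ (α - 1)) • (innerSL ℝ x))
          + (γ₁ * b) •
            (((x n) ^ α * ‖x‖ ^ (b - 2)) •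
                (EuclideanSpace.proj i : EuclideanSpace ℝ (Fin N) →L[ℝ] ℝ)
              + ((EuclideanSpace.proj (𝕜 := ℝ) i) x) •
                ((α * (x n) ^ (α - 1) * ‖x‖ ^ (b - 2)) •
                    (EuclideanSpace.proj n : EuclideanSpace ℝ (Fin N) →L[ℝ] ℝ)
                  + ((b - 2) * ‖x‖ ^ (b - 2 - 2) * (x n) ^ α) • (innerSL ℝ x))) :=
      (h1.add h2).fderiv
    rw [h3]
    simp only [ContinuousLinearMap.add_apply, ContinuousLinearMap.coe_smul',
      Pi.smul_apply, smul_eq_mul, innerSL_apply_apply, PiLp.proj_apply,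
      EuclideanSpace.single_apply, EuclideanSpace.inner_single_right, conj_trivial,
      eq_self_iff_true, if_true, mul_one]
    rw [← hXdef, ← hRdef]
    by_cases h : n = i
    · subst h
      simp only [eq_self_iff_true, if_true]
      rw [← hXdef]
      ring
    · simp only [if_neg h]
      ring
  -- summing
  have hsumsq : ∑ i : Fin N, (x i)^2 = R^2 := by
    rw [hRdef, EuclideanSpace.norm_eq, Real.sq_sqrt (by positivity)]
    simp [Real.norm_eq_abs, sq_abs]
  have hlap : lap u x = (γ₁*α*((α-1) * X^(α-1-1) * R^b + b * R^(b-2) * X^(α-1) * X)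
        + γ₁*b*(X*(α * X^(α-1) * R^(b-2))))
      + ∑ i : Fin N, γ₁*b*(X^α * R^(b-2) + (b-2) * R^(b-2-2) * X^α * (x i)^2) := by
    have h0 : lap u x = ∑ i : Fin N,
        ((if n = i then (γ₁*α*((α-1) * X^(α-1-1) * R^b + b * R^(b-2) * X^(α-1) * X)
            + γ₁*b*(X*(α * X^(α-1) * R^(b-2)))) else 0)
        + γ₁*b*(X^α * R^(b-2) + (b-2) * R^(b-2-2) * X^α * (x i)^2)) :=
      Finset.sum_congr rfl (fun i _ => hT i)
    rw [h0, Finset.sum_add_distrib, Finset.sum_ite_eq]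
    simp
  have hsum2 : ∑ i : Fin N, γ₁*b*(X^α * R^(b-2) + (b-2) * R^(b-2-2) * X^α * (x i)^2)
      = (N:ℝ) * (γ₁*b*(X^α * R^(b-2))) + γ₁*b*((b-2) * R^(b-2-2) * X^α) * R^2 := by
    have h1 : ∀ i : Fin N, γ₁*b*(X^α * R^(b-2) + (b-2) * R^(b-2-2) * X^α * (x i)^2)
        = γ₁*b*(X^α * R^(b-2)) + γ₁*b*((b-2) * R^(b-2-2) * X^α) * (x i)^2 :=
      fun i => by ring
    rw [Finset.sum_congr rfl (fun i _ => h1 i), Finset.sum_add_distrib,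
      Finset.sum_const, ← Finset.mul_sum, hsumsq]
    simp [Finset.card_univ, nsmul_eq_mul]
  have hμeq : μ = α - α*α := by linear_combination hαμ
  have hLb : L = b*(2*α + b + (N:ℝ) - 2) := by rw [hLdef]; exact hcoef.symm
  have htotal : ((γ₁*α*((α-1) * X^(α-1-1) * R^b + b * R^(b-2) * X^(α-1) * X)
        + γ₁*b*(X*(α * X^(α-1) * R^(b-2))))
      + ((N:ℝ) * (γ₁*b*(X^α * R^(b-2))) + γ₁*b*((b-2) * R^(b-2-2) * X^α) * R^2))
      + μ / X^2 * (γ₁ * X^α * R^b)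
      = γ₁ * L * (X^α * R^(b-2)) := by
    rw [hμeq, hLb, e1, e2, e3, e4]
    field_simp
    ring
  -- X ≤ R
  have hXR : X ≤ R := by
    have h1 : X^2 ≤ R^2 := by
      rw [← hsumsq]
      exact Finset.single_le_sum (f := fun i => (x i)^2) (fun i _ => sq_nonneg _)
        (Finset.mem_univ n)
    calc X = Real.sqrt (X^2) := (Real.sqrt_sq hXp.le).symm
      _ ≤ Real.sqrt (R^2) := Real.sqrt_le_sqrt h1
      _ = R := Real.sqrt_sq hR.le
  -- the final comparison
  have step1 : X^α * R^(b-2) ≤ X^((α-1)*q) * R^(b*q) := by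
    have f1 : X^α = X^((α-1)*q) * X^(q - α*(q-1)) := by
      rw [← Real.rpow_add hXp]; congr 1; ring
    have f2 : R^(b*q) = R^(q - α*(q-1)) * R^(b-2) := by
      rw [← Real.rpow_add hR]; congr 1; rw [hbdef]; field_simp; ring
    rw [f1, f2]
    have hmono : X^(q - α*(q-1)) ≤ R^(q - α*(q-1)) :=
      Real.rpow_le_rpow hXp.le hXR (by linarith)
    calc X^((α-1)*q) * X^(q - α*(q-1)) * R^(b-2)
        ≤ X^((α-1)*q) * R^(q - α*(q-1)) * R^(b-2) := by
          apply mul_le_mul_of_nonneg_right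
            (mul_le_mul_of_nonneg_left hmono (Real.rpow_nonneg hXp.le _))
            (Real.rpow_nonneg hR.le _)
      _ = X^((α-1)*q) * (R^(q - α*(q-1)) * R^(b-2)) := by ring
  have hγsplit : γ₁ ^ q = γ₁ * γ₁^(q-1) := by
    have h : γ₁ ^ q = γ₁ ^ ((1:ℝ)+(q-1)) := by norm_num
    rw [h, Real.rpow_add hγpos, Real.rpow_one]
  have hAq : A ^ q = γ₁ * L * (X^((α-1)*q) * R^(b*q)) := by
    rw [hAdef, Real.mul_rpow hγpos.le
        (mul_nonneg (mul_nonneg hα0.le (Real.rpow_nonneg hXp.le _)) (Real.rpow_nonneg hR.le _)),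
      Real.mul_rpow (mul_nonneg hα0.le (Real.rpow_nonneg hXp.le _)) (Real.rpow_nonneg hR.le _),
      Real.mul_rpow hα0.le (Real.rpow_nonneg hXp.le _),
      ← Real.rpow_mul hXp.le, ← Real.rpow_mul hR.le, hγsplit, ← hγq]
    ring
  have hfinal : γ₁ * L * (X^α * R^(b-2)) ≤ ‖v‖ ^ q := by
    calc γ₁ * L * (X^α * R^(b-2)) ≤ γ₁ * L * (X^((α-1)*q) * R^(b*q)) :=
          mul_le_mul_of_nonneg_left step1 (mul_nonneg hγpos.le hL.le)
      _ = A ^ q := hAq.symm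
      _ ≤ ‖v‖ ^ q := Real.rpow_le_rpow hA0.le hAv (by linarith)
  rw [hgv, hlap, hsum2, htotal]
  exact hfinal



/-- The separable supersolution `γ₁ x_N^α |x|^{-(2-q)/(q-1)-α}` on the half-space
(Step 1 of the proof of Theorem G). -/
theorem stmt_10 (N : ℕ) (hN : 3 ≤ N) (μ α q : ℝ)
    (hμ : μ ∈ Set.Ioc (0:ℝ) (1/4)) (hα : α = 1/2 + Real.sqrt (1/4 - μ))
    (hq1 : 1 < q) (hq2 : q < ((N : ℝ) + α) / ((N : ℝ) + α - 1))
    (hlk : α * ((N : ℝ) + α - 2) < (2 - q) / (q - 1) * (q / (q - 1) - (N : ℝ)))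
    (γ₁ : ℝ)
    (hγ₁ : γ₁ = (((2 - q) / (q - 1) * (q / (q - 1) - (N : ℝ)) - α * ((N : ℝ) + α - 2))
        / α ^ q) ^ (1 / (q - 1))) :
    ∀ x : EuclideanSpace ℝ (Fin N), 0 < x (lastIdx N (by omega)) →
      lap (fun y => γ₁ * (y (lastIdx N (by omega))) ^ α
            * ‖y‖ ^ (-(2 - q) / (q - 1) - α)) x
        + (μ / (x (lastIdx N (by omega))) ^ 2) *
            (γ₁ * (x (lastIdx N (by omega))) ^ α * ‖x‖ ^ (-(2 - q) / (q - 1) - α))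
        ≤ ‖gradient (fun y => γ₁ * (y (lastIdx N (by omega))) ^ α
            * ‖y‖ ^ (-(2 - q) / (q - 1) - α)) x‖ ^ q := by
  intro x hx
  exact aux N hN μ α q hμ hα hq1 hq2 hlk γ₁ hγ₁ (lastIdx N (by omega)) x hx
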